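/- (Sokhotskyi–Plemelj jump formula, upper radial limit.) Let f : ℝ → ℂ be integrable and let ω₀ ∈ ℝ be a point at which f satisfies a Hölder condition: there exist C > 0 and γ ∈ (0, 1] with |f(x) − f(ω₀)| ≤ C|x − ω₀|^γ for all x with |x − ω₀| ≤ 1. Then the principal-value limit L = lim_{ε→0⁺} (1/(2πi)) ∫_{|x−ω₀|>ε} f(x)/(x − ω₀) dx exists, the radial limit lim_{y→0⁺} φ_f(ω₀ + iy) exists, and lim_{y→0⁺} φ_f(ω₀ + iy) = f(ω₀)/2 + L. -/

import Mathlib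

open MeasureTheory Complex Real Filter Topology

/-- The Sokhotskyi–Plemelj (Cauchy) integral of an integrable function
`f : ℝ → ℂ`. -/
noncomputable def sokhotskyiPlemelj (f : ℝ → ℂ) (lam : ℂ) : ℂ :=
  (1 / (2 * (π : ℂ) * Complex.I)) * ∫ x : ℝ, f x / ((x : ℂ) - lam)


lemma SPaux.norm_cast_sub (x ω₀ : ℝ) : ‖(x:ℂ) - (ω₀:ℂ)‖ = |x - ω₀| := by
  rw [← Complex.ofReal_sub, Complex.norm_real, Real.norm_eq_abs]

lemma SPaux.abs_rpow_integrable (ω₀ r : ℝ) (hr : -1 < r) :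
    IntegrableOn (fun x : ℝ => |x - ω₀| ^ r) (Set.Icc (ω₀ - 1) (ω₀ + 1)) := by
  have h1 : IntervalIntegrable (fun u : ℝ => u ^ r) volume 0 1 :=
    intervalIntegral.intervalIntegrable_rpow' hr
  have p1 : IntervalIntegrable (fun u : ℝ => |u| ^ r) volume 0 1 := by
    rw [intervalIntegrable_iff, Set.uIoc_of_le zero_le_one] at h1 ⊢
    exact h1.congr_fun (fun x hx => by rw [abs_of_pos hx.1]) measurableSet_Ioc
  have p2 : IntervalIntegrable (fun u : ℝ => |u| ^ r) volume (-1) 0 := by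
    have := ((IntervalIntegrable.iff_comp_neg).mp p1)
    simpa using this.symm
  have p3 : IntervalIntegrable (fun u : ℝ => |u| ^ r) volume (-1) 1 := p2.trans p1
  have p4 := p3.comp_sub_right ω₀
  rw [intervalIntegrable_iff'] at p4
  have : Set.uIcc (-1 + ω₀) (1 + ω₀) = Set.Icc (ω₀ - 1) (ω₀ + 1) := by
    rw [Set.uIcc_of_le (by linarith)]; congr 1 <;> ring
  rwa [this] at p4

lemma SPaux.integrable_h (f : ℝ → ℂ) (hf : Integrable f) (ω₀ C γ : ℝ)
    (hγ0 : 0 < γ) (hγ1 : γ ≤ 1)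
    (hHolder : ∀ x : ℝ, |x - ω₀| ≤ 1 → ‖f x - f ω₀‖ ≤ C * |x - ω₀| ^ γ) :
    Integrable (fun x : ℝ =>
      (f x - Set.indicator (Set.Icc (ω₀ - 1) (ω₀ + 1)) (fun _ => f ω₀) x) /
        ((x : ℂ) - ω₀)) := by
  set s : Set ℝ := Set.Icc (ω₀ - 1) (ω₀ + 1) with hs
  have hsm : MeasurableSet s := measurableSet_Icc
  set k : ℝ → ℂ := fun x => f x - s.indicator (fun _ => f ω₀) x with hk
  have hkm : AEStronglyMeasurable k volume :=
    hf.aestronglyMeasurable.sub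
      ((aestronglyMeasurable_const).indicator hsm)
  have hdm : AEStronglyMeasurable (fun x : ℝ => ((x:ℂ) - ω₀)) volume :=
    (Complex.continuous_ofReal.sub continuous_const).comp continuous_id |>.aestronglyMeasurable
  have hm : AEStronglyMeasurable (fun x : ℝ => k x / ((x:ℂ) - ω₀)) volume := by
    simp only [div_eq_mul_inv]
    exact hkm.mul
      ((measurable_inv.comp ((Complex.measurable_ofReal).sub measurable_const)).aestronglyMeasurable)
  have mems : ∀ x ∈ s, |x - ω₀| ≤ 1 := by
    intro x hx
    rw [abs_le]; constructor <;> [linarith [hx.1]; linarith [hx.2]]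
  -- integrable on s
  have int_s : IntegrableOn (fun x : ℝ => k x / ((x:ℂ) - ω₀)) s := by
    apply Integrable.mono' ((SPaux.abs_rpow_integrable ω₀ (γ - 1) (by linarith)).const_mul C)
      (hm.restrict)
    rw [ae_restrict_iff' hsm]
    filter_upwards [compl_mem_ae_iff.mpr (measure_singleton ω₀)] with x hx hxs
    have hxne : x ≠ ω₀ := by simpa using hx
    have habs : (0:ℝ) < |x - ω₀| := abs_pos.mpr (sub_ne_zero.mpr hxne)
    have hkx : k x = f x - f ω₀ := by
      simp [hk, Set.indicator_of_mem hxs]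
    rw [hkx, norm_div, SPaux.norm_cast_sub]
    calc ‖f x - f ω₀‖ / |x - ω₀| ≤ C * |x - ω₀| ^ γ / |x - ω₀| := by
          gcongr
          exact hHolder x (mems x hxs)
      _ = C * |x - ω₀| ^ (γ - 1) := by
          rw [Real.rpow_sub habs, Real.rpow_one, mul_div_assoc]
  -- integrable on sᶜ
  have int_sc : IntegrableOn (fun x : ℝ => k x / ((x:ℂ) - ω₀)) sᶜ := by
    apply Integrable.mono' (hf.norm.restrict (s := sᶜ)) (hm.restrict)
    rw [ae_restrict_iff' hsm.compl]
    filter_upwards with x hxs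
    have hkx : k x = f x := by
      simp [hk, Set.indicator_of_notMem hxs]
    have h1 : (1:ℝ) ≤ |x - ω₀| := by
      by_contra hlt
      push_neg at hlt
      exact hxs (by rw [hs, Set.mem_Icc]; rw [abs_lt] at hlt; constructor <;> linarith)
    rw [hkx, norm_div, SPaux.norm_cast_sub]
    rw [div_le_iff₀ (by linarith)]
    nlinarith [norm_nonneg (f x)]
  have := int_s.union int_sc
  rwa [Set.union_compl_self, integrableOn_univ] at this

lemma SPaux.interval_inv (ω₀ a b : ℝ) (hab : a ≤ b)
    (h : (0:ℝ) ∉ Set.uIcc (a - ω₀) (b - ω₀)) :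
    ∫ x in Set.Ioc a b, ((x:ℂ) - ω₀)⁻¹ =
      ((Real.log ((b - ω₀) / (a - ω₀)) : ℝ) : ℂ) := by
  rw [← intervalIntegral.integral_of_le hab]
  have : ∀ x : ℝ, ((x:ℂ) - ω₀)⁻¹ = (((x - ω₀)⁻¹ : ℝ) : ℂ) := by
    intro x; push_cast; ring
  simp_rw [this]
  rw [intervalIntegral.integral_ofReal]
  have := intervalIntegral.integral_comp_sub_right (a := a) (b := b) (fun u : ℝ => u⁻¹) ω₀
  rw [this, integral_inv h]

lemma SPaux.integrableOn_inv_of_away (ω₀ : ℝ) {t : Set ℝ} (hm : MeasurableSet t)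
    {ε : ℝ} (hε : 0 < ε) (ht : ∀ x ∈ t, ε ≤ |x - ω₀|) (hfin : volume t ≠ ⊤) :
    IntegrableOn (fun x : ℝ => ((x:ℂ) - ω₀)⁻¹) t := by
  have : Fact (volume t < ⊤) := ⟨lt_top_iff_ne_top.mpr hfin⟩
  apply Integrable.mono' (integrable_const (ε⁻¹ : ℝ))
  · exact ((measurable_inv.comp
      ((Complex.measurable_ofReal).sub measurable_const)).aestronglyMeasurable).restrict
  · rw [ae_restrict_iff' hm]
    filter_upwards with x hx
    rw [norm_inv, SPaux.norm_cast_sub]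
    have h1 := ht x hx
    rw [inv_le_inv₀ (lt_of_lt_of_le hε h1) hε]
    exact h1

lemma SPaux.annulus_zero (ω₀ : ℝ) (c : ℂ) {ε : ℝ} (hε : 0 < ε) :
    ∫ x in {x : ℝ | ε < |x - ω₀|} ∩ Set.Icc (ω₀ - 1) (ω₀ + 1),
      c * ((x:ℂ) - ω₀)⁻¹ = 0 := by
  rcases le_or_gt 1 ε with h1 | h1
  · have : {x : ℝ | ε < |x - ω₀|} ∩ Set.Icc (ω₀ - 1) (ω₀ + 1) = ∅ := by
      ext x
      simp only [Set.mem_inter_iff, Set.mem_setOf_eq, Set.mem_Icc, Set.mem_empty_iff_false,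
        iff_false]
      rintro ⟨hx1, hx2, hx3⟩
      rcases abs_cases (x - ω₀) with ⟨he, _⟩ | ⟨he, _⟩ <;> rw [he] at hx1 <;> linarith
    rw [this]; simp
  · have hset : {x : ℝ | ε < |x - ω₀|} ∩ Set.Icc (ω₀ - 1) (ω₀ + 1) =
        Set.Ico (ω₀ - 1) (ω₀ - ε) ∪ Set.Ioc (ω₀ + ε) (ω₀ + 1) := by
      ext x
      simp only [Set.mem_inter_iff, Set.mem_setOf_eq, Set.mem_Icc, Set.mem_union,
        Set.mem_Ico, Set.mem_Ioc, lt_abs]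
      constructor
      · rintro ⟨hx1 | hx1, hx2, hx3⟩
        · right; constructor <;> linarith
        · left; constructor <;> linarith
      · rintro (⟨hx1, hx2⟩ | ⟨hx1, hx2⟩)
        · exact ⟨Or.inr (by linarith), by linarith, by linarith⟩
        · exact ⟨Or.inl (by linarith), by linarith, by linarith⟩
    rw [hset]
    have hdisj : Disjoint (Set.Ico (ω₀ - 1) (ω₀ - ε)) (Set.Ioc (ω₀ + ε) (ω₀ + 1)) := by
      rw [Set.disjoint_left]
      rintro x ⟨_, hx2⟩ ⟨hx3, _⟩
      linarith
    have haway1 : ∀ x ∈ Set.Ico (ω₀ - 1) (ω₀ - ε), ε ≤ |x - ω₀| := by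
      rintro x ⟨_, hx2⟩; rw [le_abs]; right; linarith
    have haway2 : ∀ x ∈ Set.Ioc (ω₀ + ε) (ω₀ + 1), ε ≤ |x - ω₀| := by
      rintro x ⟨hx1, _⟩; rw [le_abs]; left; linarith
    have hint1 := (SPaux.integrableOn_inv_of_away ω₀ measurableSet_Ico hε haway1
      (by simp [Real.volume_Ico])).const_mul c
    have hint2 := (SPaux.integrableOn_inv_of_away ω₀ measurableSet_Ioc hε haway2
      (by simp [Real.volume_Ioc])).const_mul c
    rw [setIntegral_union hdisj measurableSet_Ioc hint1 hint2]
    have e1 : ∫ x in Set.Ico (ω₀ - 1) (ω₀ - ε), c * ((x:ℂ) - ω₀)⁻¹ =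
        c * ((Real.log ((ω₀ - ε - ω₀) / (ω₀ - 1 - ω₀)) : ℝ) : ℂ) := by
      rw [integral_Ico_eq_integral_Ioo, ← integral_Ioc_eq_integral_Ioo, integral_const_mul,
        SPaux.interval_inv ω₀ _ _ (by linarith)]
      rw [Set.uIcc_of_le (by linarith)]
      rintro ⟨_, hx⟩; linarith
    have e2 : ∫ x in Set.Ioc (ω₀ + ε) (ω₀ + 1), c * ((x:ℂ) - ω₀)⁻¹ =
        c * ((Real.log ((ω₀ + 1 - ω₀) / (ω₀ + ε - ω₀)) : ℝ) : ℂ) := by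
      rw [integral_const_mul, SPaux.interval_inv ω₀ _ _ (by linarith)]
      rw [Set.uIcc_of_le (by linarith)]
      rintro ⟨hx, _⟩; linarith
    rw [e1, e2]
    have : (ω₀ - ε - ω₀) / (ω₀ - 1 - ω₀) = ε := by ring_nf
    rw [this]
    have : (ω₀ + 1 - ω₀) / (ω₀ + ε - ω₀) = ε⁻¹ := by ring
    rw [this, Real.log_inv]
    push_cast
    ring

lemma SPaux.measurable_T (ω₀ ε : ℝ) : MeasurableSet {x : ℝ | ε < |x - ω₀|} :=
  (isOpen_lt continuous_const ((continuous_id.sub continuous_const).abs)).measurableSet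

lemma SPaux.pv (f : ℝ → ℂ) (hf : Integrable f) (ω₀ C γ : ℝ)
    (hγ0 : 0 < γ) (hγ1 : γ ≤ 1)
    (hHolder : ∀ x : ℝ, |x - ω₀| ≤ 1 → ‖f x - f ω₀‖ ≤ C * |x - ω₀| ^ γ) :
    Tendsto (fun ε : ℝ => ∫ x in {x : ℝ | ε < |x - ω₀|}, f x / ((x : ℂ) - ω₀))
      (𝓝[>] 0)
      (𝓝 (∫ x : ℝ, (f x - Set.indicator (Set.Icc (ω₀ - 1) (ω₀ + 1)) (fun _ => f ω₀) x) /
        ((x : ℂ) - ω₀))) := by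
  set s : Set ℝ := Set.Icc (ω₀ - 1) (ω₀ + 1) with hs
  have hsm : MeasurableSet s := measurableSet_Icc
  set h : ℝ → ℂ := fun x =>
    (f x - s.indicator (fun _ => f ω₀) x) / ((x : ℂ) - ω₀) with hh
  have hint : Integrable h := SPaux.integrable_h f hf ω₀ C γ hγ0 hγ1 hHolder
  have key : ∀ ε : ℝ, 0 < ε →
      ∫ x in {x : ℝ | ε < |x - ω₀|}, f x / ((x : ℂ) - ω₀) =
      ∫ x in {x : ℝ | ε < |x - ω₀|}, h x := by
    intro ε hε
    set T : Set ℝ := {x : ℝ | ε < |x - ω₀|} with hT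
    have hTm : MeasurableSet T := SPaux.measurable_T ω₀ ε
    have hindeq : ∀ x : ℝ, s.indicator (fun _ => f ω₀) x / ((x : ℂ) - ω₀) =
        s.indicator (fun y : ℝ => f ω₀ * ((y : ℂ) - ω₀)⁻¹) x := by
      intro x
      by_cases hx : x ∈ s
      · rw [Set.indicator_of_mem hx, Set.indicator_of_mem hx, div_eq_mul_inv]
      · rw [Set.indicator_of_notMem hx, Set.indicator_of_notMem hx, zero_div]
    have haway : ∀ x ∈ T ∩ s, ε ≤ |x - ω₀| := fun x hx => le_of_lt hx.1
    have hfin : volume (T ∩ s) ≠ ⊤ := by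
      refine ne_top_of_le_ne_top ?_ (measure_mono (Set.inter_subset_right))
      rw [hs, Real.volume_Icc]
      exact ENNReal.ofReal_ne_top
    have hion : IntegrableOn (fun x : ℝ => f ω₀ * ((x : ℂ) - ω₀)⁻¹) (T ∩ s) :=
      (SPaux.integrableOn_inv_of_away ω₀ (hTm.inter hsm) hε haway hfin).const_mul _
    have hindint : IntegrableOn
        (fun x : ℝ => s.indicator (fun _ => f ω₀) x / ((x : ℂ) - ω₀)) T := by
      simp_rw [hindeq]
      rw [IntegrableOn, integrable_indicator_iff hsm, IntegrableOn,
        Measure.restrict_restrict hsm, Set.inter_comm]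
      exact hion
    have hpt : ∀ x : ℝ, f x / ((x : ℂ) - ω₀) =
        h x + s.indicator (fun _ => f ω₀) x / ((x : ℂ) - ω₀) := by
      intro x
      rw [hh, ← add_div, sub_add_cancel]
    simp_rw [hpt]
    rw [integral_add hint.integrableOn hindint]
    have hzero : ∫ x in T, s.indicator (fun _ => f ω₀) x / ((x : ℂ) - ω₀) = 0 := by
      simp_rw [hindeq]
      rw [setIntegral_indicator hsm]
      exact SPaux.annulus_zero ω₀ (f ω₀) hε
    rw [hzero, add_zero]
  have hmain : Tendsto (fun ε : ℝ => ∫ x in {x : ℝ | ε < |x - ω₀|}, h x)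
      (𝓝[>] 0) (𝓝 (∫ x : ℝ, h x)) := by
    have hrw : ∀ ε : ℝ, ∫ x in {x : ℝ | ε < |x - ω₀|}, h x =
        ∫ x : ℝ, ({x : ℝ | ε < |x - ω₀|}).indicator h x := by
      intro ε
      rw [integral_indicator (SPaux.measurable_T ω₀ ε)]
    simp_rw [hrw]
    apply tendsto_integral_filter_of_dominated_convergence (fun x => ‖h x‖)
    · filter_upwards with ε
      exact hint.aestronglyMeasurable.indicator (SPaux.measurable_T ω₀ ε)
    · filter_upwards with ε
      filter_upwards with x
      exact norm_indicator_le_norm_self h x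
    · exact hint.norm
    · filter_upwards [compl_mem_ae_iff.mpr (measure_singleton ω₀)] with x hx
      have hxne : x ≠ ω₀ := by simpa using hx
      have habs : (0:ℝ) < |x - ω₀| := abs_pos.mpr (sub_ne_zero.mpr hxne)
      apply Tendsto.congr' _ (tendsto_const_nhds (x := h x))
      filter_upwards [Ioo_mem_nhdsGT_of_mem (Set.mem_Ico.mpr ⟨le_refl _, habs⟩)] with ε hε
      exact (Set.indicator_of_mem (by exact hε.2) h).symm
  apply hmain.congr'
  filter_upwards [self_mem_nhdsWithin] with ε hε
  exact (key ε hε).symm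

lemma SPaux.D_norm_ge_abs (ω₀ y x : ℝ) :
    |x - ω₀| ≤ ‖(x:ℂ) - ((ω₀:ℂ) + (y:ℂ) * Complex.I)‖ := by
  have hre : ((x:ℂ) - ((ω₀:ℂ) + (y:ℂ) * Complex.I)).re = x - ω₀ := by simp
  calc |x - ω₀| = |((x:ℂ) - ((ω₀:ℂ) + (y:ℂ) * Complex.I)).re| := by rw [hre]
    _ ≤ ‖(x:ℂ) - ((ω₀:ℂ) + (y:ℂ) * Complex.I)‖ := Complex.abs_re_le_norm _
    _ = ‖(x:ℂ) - ((ω₀:ℂ) + (y:ℂ) * Complex.I)‖ := rfl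

lemma SPaux.D_norm_ge_y (ω₀ y x : ℝ) :
    |y| ≤ ‖(x:ℂ) - ((ω₀:ℂ) + (y:ℂ) * Complex.I)‖ := by
  have him : ((x:ℂ) - ((ω₀:ℂ) + (y:ℂ) * Complex.I)).im = -y := by simp
  calc |y| = |((x:ℂ) - ((ω₀:ℂ) + (y:ℂ) * Complex.I)).im| := by rw [him, abs_neg]
    _ ≤ ‖(x:ℂ) - ((ω₀:ℂ) + (y:ℂ) * Complex.I)‖ := Complex.abs_im_le_norm _
    _ = _ := rfl

lemma SPaux.D_ne_zero (ω₀ : ℝ) {y : ℝ} (hy : y ≠ 0) (x : ℝ) :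
    (x:ℂ) - ((ω₀:ℂ) + (y:ℂ) * Complex.I) ≠ 0 := by
  intro hz
  have := SPaux.D_norm_ge_y ω₀ y x
  rw [hz, norm_zero] at this
  exact hy (abs_nonpos_iff.mp this)

lemma SPaux.D_aesm (ω₀ y : ℝ) :
    AEStronglyMeasurable (fun x : ℝ => ((x:ℂ) - ((ω₀:ℂ) + (y:ℂ) * Complex.I))⁻¹) volume :=
  (measurable_inv.comp ((Complex.measurable_ofReal).sub measurable_const)).aestronglyMeasurable

lemma SPaux.integrable_div_D (g : ℝ → ℂ) (hg : Integrable g) (ω₀ : ℝ) {y : ℝ} (hy : 0 < y) :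
    Integrable (fun x : ℝ => g x / ((x:ℂ) - ((ω₀:ℂ) + (y:ℂ) * Complex.I))) := by
  apply Integrable.mono' (hg.norm.const_mul y⁻¹)
  · simp_rw [div_eq_mul_inv]
    exact hg.aestronglyMeasurable.mul (SPaux.D_aesm ω₀ y)
  · filter_upwards with x
    have hD : y ≤ ‖(x:ℂ) - ((ω₀:ℂ) + (y:ℂ) * Complex.I)‖ :=
      le_trans (le_abs_self y) (SPaux.D_norm_ge_y ω₀ y x)
    rw [norm_div, div_le_iff₀ (lt_of_lt_of_le hy hD)]
    calc ‖g x‖ = y⁻¹ * ‖g x‖ * y := by field_simp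
      _ ≤ y⁻¹ * ‖g x‖ * ‖(x:ℂ) - ((ω₀:ℂ) + (y:ℂ) * Complex.I)‖ := by
          have : (0:ℝ) ≤ y⁻¹ * ‖g x‖ := by positivity
          exact mul_le_mul_of_nonneg_left hD this

lemma SPaux.B_eval (ω₀ : ℝ) {y : ℝ} (hy : 0 < y) :
    ∫ x in Set.Icc (ω₀ - 1) (ω₀ + 1), ((x:ℂ) - ((ω₀:ℂ) + (y:ℂ) * Complex.I))⁻¹ =
      Complex.log (1 - (y:ℂ) * Complex.I) - Complex.log (-1 - (y:ℂ) * Complex.I) := by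
  set c : ℂ := (ω₀:ℂ) + (y:ℂ) * Complex.I with hc
  have hcont : Continuous (fun x : ℝ => ((x:ℂ) - c)⁻¹) := by
    apply Continuous.inv₀ ((Complex.continuous_ofReal).sub continuous_const)
    exact fun x => SPaux.D_ne_zero ω₀ (ne_of_gt hy) x
  have hderiv : ∀ u ∈ Set.uIcc (ω₀ - 1) (ω₀ + 1),
      HasDerivAt (fun u : ℝ => Complex.log ((u:ℂ) - c)) (((u:ℂ) - c)⁻¹) u := by
    intro u _
    have hslit : (u:ℂ) - c ∈ Complex.slitPlane := by
      rw [Complex.mem_slitPlane_iff]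
      right
      simp [hc]
      exact ne_of_gt hy
    have hG : HasDerivAt (fun z : ℂ => Complex.log (z - c)) (((u:ℂ) - c)⁻¹) ((u:ℂ)) := by
      have := (Complex.hasDerivAt_log hslit).comp (u:ℂ) ((hasDerivAt_id ((u:ℂ))).sub_const c)
      simpa [Function.comp_def] using this
    exact hG.comp_ofReal
  have hii : IntervalIntegrable (fun x : ℝ => ((x:ℂ) - c)⁻¹) volume (ω₀ - 1) (ω₀ + 1) :=
    hcont.intervalIntegrable _ _
  have hftc := intervalIntegral.integral_eq_sub_of_hasDerivAt hderiv hii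
  rw [integral_Icc_eq_integral_Ioc, ← intervalIntegral.integral_of_le (by linarith), hftc]
  have e1 : ((ω₀ + 1 : ℝ):ℂ) - c = 1 - (y:ℂ) * Complex.I := by rw [hc]; push_cast; ring
  have e2 : ((ω₀ - 1 : ℝ):ℂ) - c = -1 - (y:ℂ) * Complex.I := by rw [hc]; push_cast; ring
  rw [e1, e2]

lemma SPaux.B_tendsto (ω₀ : ℝ) :
    Tendsto (fun y : ℝ =>
        ∫ x in Set.Icc (ω₀ - 1) (ω₀ + 1), ((x:ℂ) - ((ω₀:ℂ) + (y:ℂ) * Complex.I))⁻¹)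
      (𝓝[>] 0) (𝓝 ((π:ℂ) * Complex.I)) := by
  have t1 : Tendsto (fun y : ℝ => Complex.log (1 - (y:ℂ) * Complex.I)) (𝓝[>] 0) (𝓝 0) := by
    have hc : ContinuousAt Complex.log 1 :=
      continuousAt_clog (by simp [Complex.mem_slitPlane_iff])
    have harg : Tendsto (fun y : ℝ => 1 - (y:ℂ) * Complex.I) (𝓝[>] 0) (𝓝 1) := by
      have : Continuous (fun y : ℝ => 1 - (y:ℂ) * Complex.I) :=
        continuous_const.sub ((Complex.continuous_ofReal).mul continuous_const)
      have := this.tendsto 0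
      simpa using this.mono_left nhdsWithin_le_nhds
    have := hc.tendsto.comp harg
    simpa [Complex.log_one, Function.comp_def] using this
  have t2 : Tendsto (fun y : ℝ => Complex.log (-1 - (y:ℂ) * Complex.I)) (𝓝[>] 0)
      (𝓝 (-(π:ℂ) * Complex.I)) := by
    have hlog := Complex.tendsto_log_nhdsWithin_im_neg_of_re_neg_of_im_zero
      (z := (-1 : ℂ)) (by norm_num) (by norm_num)
    have harg : Tendsto (fun y : ℝ => -1 - (y:ℂ) * Complex.I) (𝓝[>] 0)
        (𝓝[{z : ℂ | z.im < 0}] (-1)) := by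
      rw [tendsto_nhdsWithin_iff]
      constructor
      · have : Continuous (fun y : ℝ => -1 - (y:ℂ) * Complex.I) :=
          continuous_const.sub ((Complex.continuous_ofReal).mul continuous_const)
        have := this.tendsto 0
        simpa using this.mono_left nhdsWithin_le_nhds
      · filter_upwards [self_mem_nhdsWithin] with y hy
        simp only [Set.mem_setOf_eq, Complex.sub_im, Complex.neg_im, Complex.one_im,
          Complex.mul_im, Complex.ofReal_re, Complex.I_im, Complex.ofReal_im, Complex.I_re]
        simpa using hy
    have := hlog.comp harg
    have habs : ‖(-1:ℂ)‖ = 1 := by simp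
    rw [habs, Real.log_one] at this
    simpa [neg_mul, Function.comp_def] using this
  have := t1.sub t2
  simp only [zero_sub, neg_mul, neg_neg] at this
  apply this.congr'
  filter_upwards [self_mem_nhdsWithin] with y hy
  exact (SPaux.B_eval ω₀ hy).symm

lemma SPaux.A_tendsto (f : ℝ → ℂ) (hf : Integrable f) (ω₀ C γ : ℝ)
    (hγ0 : 0 < γ) (hγ1 : γ ≤ 1)
    (hHolder : ∀ x : ℝ, |x - ω₀| ≤ 1 → ‖f x - f ω₀‖ ≤ C * |x - ω₀| ^ γ) :
    Tendsto (fun y : ℝ => ∫ x : ℝ,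
        (f x - Set.indicator (Set.Icc (ω₀ - 1) (ω₀ + 1)) (fun _ => f ω₀) x) /
          ((x:ℂ) - ((ω₀:ℂ) + (y:ℂ) * Complex.I)))
      (𝓝[>] 0)
      (𝓝 (∫ x : ℝ,
        (f x - Set.indicator (Set.Icc (ω₀ - 1) (ω₀ + 1)) (fun _ => f ω₀) x) /
          ((x:ℂ) - ω₀))) := by
  set s : Set ℝ := Set.Icc (ω₀ - 1) (ω₀ + 1) with hs
  set k : ℝ → ℂ := fun x => f x - s.indicator (fun _ => f ω₀) x with hk
  have hint : Integrable (fun x : ℝ => k x / ((x:ℂ) - ω₀)) :=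
    SPaux.integrable_h f hf ω₀ C γ hγ0 hγ1 hHolder
  have hkm : AEStronglyMeasurable k volume :=
    hf.aestronglyMeasurable.sub ((aestronglyMeasurable_const).indicator measurableSet_Icc)
  apply tendsto_integral_filter_of_dominated_convergence
      (fun x => ‖k x / ((x:ℂ) - ω₀)‖)
  · filter_upwards with y
    simp_rw [div_eq_mul_inv]
    exact hkm.mul (SPaux.D_aesm ω₀ y)
  · filter_upwards with y
    filter_upwards [compl_mem_ae_iff.mpr (measure_singleton ω₀)] with x hx
    have hxne : x ≠ ω₀ := by simpa using hx
    have habs : (0:ℝ) < |x - ω₀| := abs_pos.mpr (sub_ne_zero.mpr hxne)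
    rw [norm_div, norm_div, SPaux.norm_cast_sub]
    have := habs
    gcongr
    exact SPaux.D_norm_ge_abs ω₀ y x
  · exact hint.norm
  · filter_upwards [compl_mem_ae_iff.mpr (measure_singleton ω₀)] with x hx
    have hxne : x ≠ ω₀ := by simpa using hx
    have hdne : ((x:ℂ) - ω₀) ≠ 0 := by
      rw [sub_ne_zero]
      exact_mod_cast fun hxx => hxne (Complex.ofReal_injective hxx)
    have hden : Tendsto (fun y : ℝ => (x:ℂ) - ((ω₀:ℂ) + (y:ℂ) * Complex.I))
        (𝓝[>] 0) (𝓝 ((x:ℂ) - ω₀)) := by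
      have hcont : Continuous (fun y : ℝ => (x:ℂ) - ((ω₀:ℂ) + (y:ℂ) * Complex.I)) :=
        continuous_const.sub (continuous_const.add
          ((Complex.continuous_ofReal).mul continuous_const))
      have := hcont.tendsto 0
      simp only [Complex.ofReal_zero, zero_mul, add_zero] at this
      exact this.mono_left nhdsWithin_le_nhds
    exact (tendsto_const_nhds.div hden hdne)

lemma SPaux.indicator_integrable (f : ℝ → ℂ) (ω₀ : ℝ) :
    Integrable (Set.indicator (Set.Icc (ω₀ - 1) (ω₀ + 1)) (fun _ => f ω₀)) := by
  rw [integrable_indicator_iff measurableSet_Icc]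
  exact (integrableOn_const_iff).mpr (Or.inr (measure_Icc_lt_top))

lemma SPaux.split (f : ℝ → ℂ) (hf : Integrable f) (ω₀ : ℝ) {y : ℝ} (hy : 0 < y) :
    ∫ x : ℝ, f x / ((x:ℂ) - ((ω₀:ℂ) + (y:ℂ) * Complex.I)) =
      (∫ x : ℝ, (f x - Set.indicator (Set.Icc (ω₀ - 1) (ω₀ + 1)) (fun _ => f ω₀) x) /
        ((x:ℂ) - ((ω₀:ℂ) + (y:ℂ) * Complex.I))) +
      f ω₀ * ∫ x in Set.Icc (ω₀ - 1) (ω₀ + 1),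
        ((x:ℂ) - ((ω₀:ℂ) + (y:ℂ) * Complex.I))⁻¹ := by
  set s : Set ℝ := Set.Icc (ω₀ - 1) (ω₀ + 1) with hs
  set ind : ℝ → ℂ := s.indicator (fun _ => f ω₀) with hind
  set k : ℝ → ℂ := fun x => f x - ind x with hk
  have hindint : Integrable ind := SPaux.indicator_integrable f ω₀
  have hkint : Integrable k := hf.sub hindint
  have hI2 : Integrable (fun x : ℝ => k x / ((x:ℂ) - ((ω₀:ℂ) + (y:ℂ) * Complex.I))) :=
    SPaux.integrable_div_D k hkint ω₀ hy
  have hIind : Integrable (fun x : ℝ => ind x / ((x:ℂ) - ((ω₀:ℂ) + (y:ℂ) * Complex.I))) :=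
    SPaux.integrable_div_D ind hindint ω₀ hy
  have hpt : ∀ x : ℝ, f x / ((x:ℂ) - ((ω₀:ℂ) + (y:ℂ) * Complex.I)) =
      k x / ((x:ℂ) - ((ω₀:ℂ) + (y:ℂ) * Complex.I)) +
      ind x / ((x:ℂ) - ((ω₀:ℂ) + (y:ℂ) * Complex.I)) := by
    intro x
    rw [hk, ← add_div, sub_add_cancel]
  simp_rw [hpt]
  rw [integral_add hI2 hIind]
  congr 1
  have hindeq : ∀ x : ℝ, ind x / ((x:ℂ) - ((ω₀:ℂ) + (y:ℂ) * Complex.I)) =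
      s.indicator (fun x : ℝ => f ω₀ * ((x:ℂ) - ((ω₀:ℂ) + (y:ℂ) * Complex.I))⁻¹) x := by
    intro x
    by_cases hx : x ∈ s
    · rw [hind, Set.indicator_of_mem hx, Set.indicator_of_mem hx, div_eq_mul_inv]
    · rw [hind, Set.indicator_of_notMem hx, Set.indicator_of_notMem hx, zero_div]
  simp_rw [hindeq]
  rw [integral_indicator measurableSet_Icc, integral_const_mul]

/-- Sokhotskyi–Plemelj jump formula (upper radial limit): if `f` is integrable
and Hölder at `ω₀`, then the principal-value integral
`L = lim_{ε→0⁺} (1/(2πi)) ∫_{|x−ω₀|>ε} f(x)/(x−ω₀) dx` exists, the upper radial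
limit of `φ_f` at `ω₀` exists, and it equals `f(ω₀)/2 + L`. -/
theorem sokhotskyiPlemelj_jump_upper
    (f : ℝ → ℂ) (hf : Integrable f) (ω₀ : ℝ)
    (C γ : ℝ) (hC : 0 < C) (hγ : γ ∈ Set.Ioc (0 : ℝ) 1)
    (hHolder : ∀ x : ℝ, |x - ω₀| ≤ 1 → ‖f x - f ω₀‖ ≤ C * |x - ω₀| ^ γ) :
    ∃ L : ℂ,
      Tendsto (fun ε : ℝ =>
          (1 / (2 * (π : ℂ) * Complex.I)) *
            ∫ x in {x : ℝ | ε < |x - ω₀|}, f x / ((x : ℂ) - ω₀))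
        (𝓝[>] 0) (𝓝 L) ∧
      Tendsto (fun y : ℝ => sokhotskyiPlemelj f ((ω₀ : ℂ) + y * Complex.I))
        (𝓝[>] 0) (𝓝 (f ω₀ / 2 + L)) := by
  obtain ⟨hγ0, hγ1⟩ := hγ
  set c : ℂ := 1 / (2 * (π : ℂ) * Complex.I) with hc
  set Ih : ℂ := ∫ x : ℝ,
    (f x - Set.indicator (Set.Icc (ω₀ - 1) (ω₀ + 1)) (fun _ => f ω₀) x) / ((x : ℂ) - ω₀)
    with hIh
  refine ⟨c * Ih, ?_, ?_⟩
  · exact (SPaux.pv f hf ω₀ C γ hγ0 hγ1 hHolder).const_mul c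
  · have hA := SPaux.A_tendsto f hf ω₀ C γ hγ0 hγ1 hHolder
    have hB := (SPaux.B_tendsto ω₀).const_mul (f ω₀)
    have htot := ((hA.add hB).const_mul c)
    have hval : c * (Ih + f ω₀ * ((π:ℂ) * Complex.I)) = f ω₀ / 2 + c * Ih := by
      rw [hc]
      have h2 : (2 * (π : ℂ) * Complex.I) ≠ 0 := by
        simp [Real.pi_ne_zero, Complex.I_ne_zero, Complex.ofReal_ne_zero]
      field_simp
      ring
    rw [hval] at htot
    apply htot.congr'
    filter_upwards [self_mem_nhdsWithin] with y hy
    rw [sokhotskyiPlemelj, SPaux.split f hf ω₀ hy, hc]
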